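/- The poset of 312-avoiding real TITOs under the Dyer order is order-isomorphic to the poset of 132-avoiding co-real TITOs under the Dyer order. Moreover, the poset of 312-avoiding real TITOs is self-dual: there exists a bijection φ of the set of 312-avoiding real TITOs to itself such that for all 312-avoiding real TITOs x and y, Inv(x) ⊆ Inv(y) if and only if Inv(φ(y)) ⊆ Inv(φ(x)). -/

import Mathlib

structure TITO (n : ℕ) where
  rel : ℤ → ℤ → Prop
  refl : ∀ a, rel a a
  antisymm : ∀ a b, rel a b → rel b a → a = b
  trans : ∀ a b c, rel a b → rel b c → rel a c
  total : ∀ a b, rel a b ∨ rel b a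
  invariant : ∀ a b, rel a b ↔ rel (a + n) (b + n)

namespace TITO

variable {n : ℕ}

/-- The inversion set of a TITO. -/
def Inversions (t : TITO n) : Set (ℤ × ℤ) := {p | p.1 < p.2 ∧ t.rel p.2 p.1}

/-- A TITO is 312-avoiding if there are no integers `a < b < c` with `c ≼ a` and `a ≼ b`. -/
def Avoids312 (t : TITO n) : Prop :=
  ¬ ∃ a b c : ℤ, a < b ∧ b < c ∧ t.rel c a ∧ t.rel a b

/-- A TITO is 132-avoiding if there are no integers `a < b < c` with `a ≼ c` and `c ≼ b`. -/
def Avoids132 (t : TITO n) : Prop :=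
  ¬ ∃ a b c : ℤ, a < b ∧ b < c ∧ t.rel a c ∧ t.rel c b

/-- A set is order-convex for a TITO. -/
def OrderConvex (t : TITO n) (S : Set ℤ) : Prop :=
  ∀ x ∈ S, ∀ z ∈ S, ∀ y : ℤ, t.rel x y → t.rel y z → y ∈ S

/-- A block of a TITO: an order-convex set with no minimal and no maximal element in which
all intervals are finite. -/
def IsBlock (t : TITO n) (I : Set ℤ) : Prop :=
  t.OrderConvex I ∧
  (∀ a ∈ I, ∃ b ∈ I, b ≠ a ∧ t.rel b a) ∧
  (∀ a ∈ I, ∃ b ∈ I, b ≠ a ∧ t.rel a b) ∧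
  (∀ a ∈ I, ∀ c ∈ I, t.rel a c → {b : ℤ | t.rel a b ∧ t.rel b c}.Finite)

/-- A block is waxing if `a ≼ a + n` for every `a` in it. -/
def Waxing (t : TITO n) (I : Set ℤ) : Prop := ∀ a ∈ I, t.rel a (a + n)

/-- A block is waning if `a + n ≼ a` for every `a` in it. -/
def Waning (t : TITO n) (I : Set ℤ) : Prop := ∀ a ∈ I, t.rel (a + n) a

/-- A TITO is real if `a ≼ a + n` whenever the residue class of `a` mod `n` is order-convex. -/
def IsReal (t : TITO n) : Prop :=
  ∀ a : ℤ, t.OrderConvex {x : ℤ | ∃ k : ℤ, x = a + k * n} → t.rel a (a + n)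

/-- A TITO is co-real if `a + n ≼ a` whenever the residue class of `a` mod `n` is order-convex. -/
def IsCoReal (t : TITO n) : Prop :=
  ∀ a : ℤ, t.OrderConvex {x : ℤ | ∃ k : ℤ, x = a + k * n} → t.rel (a + n) a

/-- `(a, b)` with `a < b` is a lower wall if `b ≼ a` is a cover relation of the total order. -/
def LowerWall (t : TITO n) (a b : ℤ) : Prop :=
  a < b ∧ t.rel b a ∧ ∀ z : ℤ, z ≠ a → z ≠ b → ¬ (t.rel b z ∧ t.rel z a)

end TITO

namespace Dev

open scoped Classical

/-! ### ENat helpers -/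

lemma enat_le_of_forall {A B : ℕ∞} (h : ∀ m : ℕ, (m:ℕ∞) ≤ A → (m:ℕ∞) ≤ B) : A ≤ B := by
  cases A with
  | top =>
    have : B = ⊤ := by
      by_contra hB
      lift B to ℕ using hB
      have := h (B+1) le_top
      simp only [Nat.cast_le] at this
      omega
    simp [this]
  | coe a => exact h a le_rfl

lemma enat_exists_coe {A : ℕ∞} (h : A ≠ ⊤) : ∃ c : ℕ, (c:ℕ∞) = A := by
  obtain ⟨c, hc⟩ := WithTop.ne_top_iff_exists.mp h
  exact ⟨c, by exact_mod_cast hc⟩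

lemma enat_eq_top_of_forall {A : ℕ∞} (h : ∀ m : ℕ, (m:ℕ∞) ≤ A) : A = ⊤ :=
  eq_top_iff.mpr (enat_le_of_forall (fun m _ => h m))

lemma enat_eq_of_forall {A B : ℕ∞} (h : ∀ m : ℕ, (m:ℕ∞) ≤ A ↔ (m:ℕ∞) ≤ B) : A = B :=
  le_antisymm (enat_le_of_forall fun m hm => (h m).1 hm)
    (enat_le_of_forall fun m hm => (h m).2 hm)

/-! ### Arc functions -/

variable (n : ℕ)

structure SF where
  s : ℤ → ℕ∞
  per : ∀ a : ℤ, s (a + n) = s a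
  nested : ∀ a : ℤ, ∀ j : ℕ, 1 ≤ j → (j:ℕ∞) ≤ s a → s (a + j) + j ≤ s a
  valid : ¬ ∃ p : ℤ, s p = ⊤ ∧ ∀ b : ℤ, s b = ⊤ → (n:ℤ) ∣ (b - p)

variable {n}

namespace SF

lemma per_int (f : SF n) (a : ℤ) (k : ℤ) : f.s (a + k * n) = f.s a := by
  induction k using Int.induction_on with
  | zero => simp
  | succ k ih =>
    have : a + (k+1) * n = (a + k * n) + n := by ring
    rw [this, f.per, ih]
  | pred k ih =>
    have : (a + (-k-1) * n) + n = a + (-k) * n := by ring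
    have h2 := f.per (a + (-k-1) * n)
    rw [this] at h2
    rw [← h2]
    exact ih

lemma per_of_dvd (f : SF n) {a b : ℤ} (h : (n:ℤ) ∣ (b - a)) : f.s b = f.s a := by
  obtain ⟨k, hk⟩ := h
  have : b = a + k * n := by linarith [hk]
  rw [this]
  exact f.per_int a k

lemma lt_n_of_ne_top (f : SF n) (hn : 1 ≤ n) {a : ℤ} (h : f.s a ≠ ⊤) : f.s a < (n:ℕ∞) := by
  by_contra hlt
  push_neg at hlt
  have h2 := f.nested a n hn hlt
  rw [f.per] at h2
  lift f.s a to ℕ using h with v hv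
  rw [← Nat.cast_add, Nat.cast_le] at h2
  omega

end SF

/-! ### The TITO attached to an arc function -/

/-- inversion predicate: for `x < y`, `y ≼ x`. -/
def SF.inv (f : SF n) (x y : ℤ) : Prop := (((y - x).toNat : ℕ) : ℕ∞) ≤ f.s x

namespace SF

variable (f : SF n)

lemma F1 {a b c : ℤ} (hab : a < b) (hbc : b < c) (h : f.inv a c) : f.inv a b := by
  refine le_trans ?_ h
  rw [Nat.cast_le]
  omega

lemma F2 {a b c : ℤ} (hab : a < b) (hbc : b < c) (h1 : f.inv a b) (h2 : f.inv b c) :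
    f.inv a c := by
  unfold SF.inv at *
  set j : ℕ := (b - a).toNat with hj
  have hj1 : 1 ≤ j := by omega
  have hb : a + (j:ℤ) = b := by omega
  have hnest := f.nested a j hj1 h1
  rw [hb] at hnest
  have hsplit : ((c - a).toNat : ℕ) = (c - b).toNat + j := by omega
  rw [hsplit, Nat.cast_add]
  calc ((c - b).toNat : ℕ∞) + (j:ℕ∞) ≤ f.s b + j := by
        exact add_le_add h2 le_rfl
    _ ≤ f.s a := hnest

def rel (x y : ℤ) : Prop :=
  x = y ∨ (x < y ∧ ¬ f.inv x y) ∨ (y < x ∧ f.inv y x)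

lemma rel_lt_iff {x y : ℤ} (h : x < y) : f.rel x y ↔ ¬ f.inv x y := by
  unfold rel
  constructor
  · rintro (rfl | ⟨_, h2⟩ | ⟨h2, _⟩)
    · exact absurd h (lt_irrefl x)
    · exact h2
    · omega
  · intro h2; exact Or.inr (Or.inl ⟨h, h2⟩)

lemma rel_gt_iff {x y : ℤ} (h : y < x) : f.rel x y ↔ f.inv y x := by
  unfold rel
  constructor
  · rintro (rfl | ⟨h2, _⟩ | ⟨_, h2⟩)
    · exact absurd h (lt_irrefl x)
    · omega
    · exact h2
  · intro h2; exact Or.inr (Or.inr ⟨h, h2⟩)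

lemma rel_refl (x : ℤ) : f.rel x x := Or.inl rfl

lemma rel_antisymm (x y : ℤ) (h1 : f.rel x y) (h2 : f.rel y x) : x = y := by
  rcases lt_trichotomy x y with h | h | h
  · rw [f.rel_lt_iff h] at h1
    rw [f.rel_gt_iff h] at h2
    exact absurd h2 h1
  · exact h
  · rw [f.rel_gt_iff h] at h1
    rw [f.rel_lt_iff h] at h2
    exact absurd h1 h2

lemma rel_total (x y : ℤ) : f.rel x y ∨ f.rel y x := by
  rcases lt_trichotomy x y with h | h | h
  · rw [f.rel_lt_iff h, f.rel_gt_iff h]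
    exact (em (f.inv x y)).symm.imp id id
  · exact Or.inl (Or.inl h)
  · rw [f.rel_gt_iff h, f.rel_lt_iff h]
    exact (em (f.inv y x)).imp id id

lemma rel_trans (a b c : ℤ) (hab : f.rel a b) (hbc : f.rel b c) : f.rel a c := by
  rcases eq_or_ne a b with rfl | hab' ; · exact hbc
  rcases eq_or_ne b c with rfl | hbc' ; · exact hab
  rcases eq_or_ne a c with rfl | hac' ; · exact f.rel_refl a
  rcases lt_trichotomy a b with h1 | h1 | h1
  · rcases lt_trichotomy b c with h2 | h2 | h2
    · -- a < b < c
      rw [f.rel_lt_iff h1] at hab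
      rw [f.rel_lt_iff (h1.trans h2)]
      intro hI
      exact hab (f.F1 h1 h2 hI)
    · omega
    · rcases lt_trichotomy a c with h3 | h3 | h3
      · -- a < c < b
        rw [f.rel_lt_iff h1] at hab
        rw [f.rel_gt_iff h2] at hbc
        rw [f.rel_lt_iff h3]
        intro hI
        exact hab (f.F2 h3 h2 hI hbc)
      · omega
      · -- c < a < b
        rw [f.rel_lt_iff h1] at hab
        rw [f.rel_gt_iff h2] at hbc
        rw [f.rel_gt_iff h3]
        exact f.F1 h3 h1 hbc
  · omega
  · rcases lt_trichotomy b c with h2 | h2 | h2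
    · rcases lt_trichotomy a c with h3 | h3 | h3
      · -- b < a < c
        rw [f.rel_gt_iff h1] at hab
        rw [f.rel_lt_iff h2] at hbc
        rw [f.rel_lt_iff h3]
        intro hI
        exact hbc (f.F2 h1 h3 hab hI)
      · omega
      · -- b < c < a
        rw [f.rel_gt_iff h1] at hab
        rw [f.rel_lt_iff h2] at hbc
        exact absurd (f.F1 h2 h3 hab) hbc
    · omega
    · -- c < b < a
      rw [f.rel_gt_iff h1] at hab
      rw [f.rel_gt_iff h2] at hbc
      rw [f.rel_gt_iff (h2.trans h1)]
      exact f.F2 h2 h1 hbc hab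

lemma inv_shift {x y : ℤ} : f.inv (x + n) (y + n) ↔ f.inv x y := by
  unfold SF.inv
  rw [f.per]
  have : (y + n - (x + n)) = y - x := by ring
  rw [this]

lemma rel_invariant (x y : ℤ) : f.rel x y ↔ f.rel (x + n) (y + n) := by
  unfold rel
  rw [f.inv_shift, f.inv_shift]
  constructor
  · rintro (rfl | ⟨h, h2⟩ | ⟨h, h2⟩)
    · exact Or.inl rfl
    · exact Or.inr (Or.inl ⟨by omega, h2⟩)
    · exact Or.inr (Or.inr ⟨by omega, h2⟩)
  · rintro (h | ⟨h, h2⟩ | ⟨h, h2⟩)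
    · exact Or.inl (by omega)
    · exact Or.inr (Or.inl ⟨by omega, h2⟩)
    · exact Or.inr (Or.inr ⟨by omega, h2⟩)

def toTITO : TITO n where
  rel := f.rel
  refl := f.rel_refl
  antisymm := f.rel_antisymm
  trans := f.rel_trans
  total := f.rel_total
  invariant := f.rel_invariant

lemma toTITO_avoids312 : f.toTITO.Avoids312 := by
  rintro ⟨a, b, c, hab, hbc, hca, hab2⟩
  change f.rel c a at hca
  change f.rel a b at hab2
  rw [f.rel_gt_iff (hab.trans hbc)] at hca
  rw [f.rel_lt_iff hab] at hab2
  exact hab2 (f.F1 hab hbc hca)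

lemma toTITO_isReal (hn : 2 ≤ n) : f.toTITO.IsReal := by
  intro a hconv
  have hn0 : (0:ℤ) < n := by exact_mod_cast Nat.zero_lt_of_lt hn
  have hlt : a < a + n := by omega
  change f.rel a (a + n)
  rw [f.rel_lt_iff hlt]
  unfold SF.inv
  have htn : ((a + n - a).toNat : ℕ) = n := by omega
  rw [htn]
  intro hle
  -- then s a = ⊤ (since finite values are < n)
  have hstop : f.s a = ⊤ := by
    by_contra hne
    exact absurd hle (not_le_of_gt (f.lt_n_of_ne_top (by omega) hne))
  -- get another top class
  have hv := f.valid
  push_neg at hv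
  obtain ⟨b, hb, hnd⟩ := hv a hstop
  set d : ℤ := (b - a) % n with hd
  have hd0 : 0 ≤ d := Int.emod_nonneg _ (by omega)
  have hdn : d < n := Int.emod_lt_of_pos _ hn0
  have hdvd : (n:ℤ) ∣ (b - a - d) := Int.dvd_self_sub_of_emod_eq rfl
  have hdne : d ≠ 0 := by
    intro h0
    rw [h0, sub_zero] at hdvd
    exact hnd hdvd
  set y : ℤ := a + d with hy
  have hsy : f.s y = ⊤ := by
    have heq : f.s y = f.s b := f.per_of_dvd (by
      have h9 : y - b = -(b - a - d) := by ring
      rw [h9]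
      exact dvd_neg.mpr hdvd)
    rw [heq, hb]
  have hmem := hconv (a + n) ⟨1, by ring⟩ a ⟨0, by ring⟩ y
    (by
      show f.rel (a + n) y
      rw [f.rel_gt_iff (by omega)]
      unfold SF.inv
      rw [hsy]
      exact le_top)
    (by
      show f.rel y a
      rw [f.rel_gt_iff (by omega)]
      unfold SF.inv
      rw [hstop]
      exact le_top)
  obtain ⟨k, hk⟩ := hmem
  have hdk : d = k * n := by omega
  have hdvd2 : (n:ℤ) ∣ d := ⟨k, by rw [hdk]; ring⟩
  have := Int.le_of_dvd (by omega) hdvd2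
  omega

end SF

/-! ### TITO generic helpers -/

namespace TITOAux

variable {t : TITO n}

lemma ext' {t1 t2 : TITO n} (h : ∀ a b, t1.rel a b ↔ t2.rel a b) : t1 = t2 := by
  cases t1; cases t2
  congr
  funext a b
  exact propext (h a b)

lemma rel_of_not_rel {a b : ℤ} (h : ¬ t.rel a b) : t.rel b a :=
  (t.total a b).resolve_left h

lemma not_rel_of_rel {a b : ℤ} (hne : a ≠ b) (h : t.rel a b) : ¬ t.rel b a :=
  fun h2 => hne (t.antisymm a b h h2)

lemma rel_shift (k : ℤ) {a b : ℤ} : t.rel a b ↔ t.rel (a + k * n) (b + k * n) := by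
  induction k using Int.induction_on with
  | zero => simp
  | succ k ih =>
    rw [ih, t.invariant]
    constructor
    · intro h
      have e1 : a + (↑k + 1) * ↑n = a + ↑k * ↑n + ↑n := by ring
      have e2 : b + (↑k + 1) * ↑n = b + ↑k * ↑n + ↑n := by ring
      rw [e1, e2]; exact h
    · intro h
      have e1 : a + (↑k + 1) * ↑n = a + ↑k * ↑n + ↑n := by ring
      have e2 : b + (↑k + 1) * ↑n = b + ↑k * ↑n + ↑n := by ring
      rw [e1, e2] at h; exact h
  | pred k ih =>
    rw [ih]
    have := t.invariant (a + (-↑k - 1) * ↑n) (b + (-↑k - 1) * ↑n)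
    have e1 : a + (-↑k - 1) * ↑n + ↑n = a + -↑k * ↑n := by ring
    have e2 : b + (-↑k - 1) * ↑n + ↑n = b + -↑k * ↑n := by ring
    rw [e1, e2] at this
    exact this.symm

lemma inv_mono (h312 : t.Avoids312) {a b c : ℤ} (hab : a < b) (hbc : b < c)
    (h : t.rel c a) : t.rel b a := by
  by_contra hn2
  have hba := rel_of_not_rel hn2
  exact h312 ⟨a, b, c, hab, hbc, h, hba⟩

lemma top_all (h312 : t.Avoids312) (hn1 : 1 ≤ n) {x : ℤ} (h : t.rel (x + n) x)
    (m : ℕ) (hm : 1 ≤ m) : t.rel (x + m) x := by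
  have chain : ∀ k : ℕ, t.rel (x + (k + 1) * n) x := by
    intro k
    induction k with
    | zero => simpa using h
    | succ k ih =>
      have hshift := (rel_shift (t := t) ((k:ℤ)+1)).mp h
      have e1 : x + (n:ℤ) + ((k:ℤ)+1) * n = x + (((k:ℤ)+1) + 1) * n := by ring
      rw [e1] at hshift
      have h2 := t.trans _ _ _ hshift ih
      have e3 : x + (((k+1:ℕ):ℤ) + 1) * n = x + (((k:ℤ)+1)+1) * n := by push_cast; ring
      rw [e3]
      exact h2
  have hc := chain m
  refine inv_mono h312 (by omega : x < x + (m:ℤ)) ?_ hc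
  have : (m:ℤ) < (m + 1) * n := by
    have : (1:ℤ) ≤ n := by exact_mod_cast hn1
    nlinarith
  omega

lemma notop (h312 : t.Avoids312) {x : ℤ} (h : ¬ t.rel (x + n) x)
    (m : ℕ) (hm : n ≤ m) (hn1 : 1 ≤ n) : ¬ t.rel (x + m) x := by
  intro hrel
  rcases eq_or_lt_of_le hm with rfl | hlt
  · exact h hrel
  · exact h (inv_mono h312 (by omega) (by omega) hrel)

end TITOAux

/-! ### Extraction -/

open TITOAux

noncomputable def sOf (t : TITO n) : ℤ → ℕ∞ := fun x =>
  if t.rel (x + n) x then ⊤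
  else (((Finset.Icc 1 (n-1)).filter (fun j : ℕ => t.rel (x + j) x)).card : ℕ∞)

lemma sOf_top {t : TITO n} {x : ℤ} (h : t.rel (x + n) x) : sOf t x = ⊤ := if_pos h

lemma sOf_ne_top {t : TITO n} {x : ℤ} (h : ¬ t.rel (x + n) x) : sOf t x ≠ ⊤ := by
  rw [sOf, if_neg h]
  exact ENat.coe_ne_top _

lemma agree {t : TITO n} (h312 : t.Avoids312) (hn : 2 ≤ n) (x : ℤ) (m : ℕ) (hm : 1 ≤ m) :
    t.rel (x + m) x ↔ (m:ℕ∞) ≤ sOf t x := by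
  have hn1 : 1 ≤ n := by omega
  by_cases htop : t.rel (x + n) x
  · rw [sOf_top htop]
    simp only [le_top, iff_true]
    exact top_all h312 hn1 htop m hm
  · rw [sOf, if_neg htop]
    set F := (Finset.Icc 1 (n-1)).filter (fun j : ℕ => t.rel (x + j) x) with hF
    have dc : ∀ j j' : ℕ, 1 ≤ j → j ≤ j' → t.rel (x + j') x → t.rel (x + j) x := by
      intro j j' h1 h2 hr
      rcases eq_or_lt_of_le h2 with rfl | hlt
      · exact hr
      · exact inv_mono h312 (by omega) (by omega) hr
    have hFcard : F.card ≤ n - 1 := le_trans (Finset.card_filter_le _ _) (by simp)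
    by_cases hmn : m ≤ n - 1
    · rw [Nat.cast_le]
      constructor
      · intro hr
        have hsub : Finset.Icc 1 m ⊆ F := by
          intro i hi
          simp only [Finset.mem_Icc] at hi
          rw [hF, Finset.mem_filter, Finset.mem_Icc]
          exact ⟨⟨hi.1, by omega⟩, dc i m hi.1 hi.2 hr⟩
        have := Finset.card_le_card hsub
        simpa using this
      · intro hc
        by_contra hnr
        have hsub : F ⊆ Finset.Icc 1 (m-1) := by
          intro k hk
          rw [hF, Finset.mem_filter, Finset.mem_Icc] at hk
          rw [Finset.mem_Icc]
          refine ⟨hk.1.1, ?_⟩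
          by_contra hkm
          exact hnr (dc m k hm (by omega) hk.2)
        have := Finset.card_le_card hsub
        simp only [Nat.card_Icc] at this
        omega
    · have h1 : ¬ t.rel (x + m) x := notop h312 htop m (by omega) hn1
      have h2 : ¬ ((m:ℕ∞) ≤ (F.card:ℕ∞)) := by
        rw [Nat.cast_le]
        omega
      exact iff_of_false h1 h2

lemma sOf_per (t : TITO n) (x : ℤ) : sOf t (x + n) = sOf t x := by
  have hshift : ∀ m : ℕ, t.rel (x + n + m) (x + n) ↔ t.rel (x + m) x := by
    intro m
    have h0 := t.invariant (x + m) x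
    have e : x + (m:ℤ) + n = x + n + m := by ring
    rw [e] at h0
    exact h0.symm
  unfold sOf
  by_cases h : t.rel (x + (n:ℤ) + n) (x + n)
  · rw [if_pos h, if_pos ((hshift n).mp h)]
  · rw [if_neg h, if_neg (fun hc => h ((hshift n).mpr hc))]
    have hfil : (Finset.filter (fun j : ℕ => t.rel (x + (n:ℤ) + j) (x + n)) (Finset.Icc 1 (n-1)))
        = Finset.filter (fun j : ℕ => t.rel (x + j) x) (Finset.Icc 1 (n-1)) := by
      apply Finset.filter_congr
      intro j _
      exact iff_iff_eq.mp (hshift j) ▸ Iff.rfl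
    rw [hfil]

lemma sOf_per_int (t : TITO n) (a : ℤ) (k : ℤ) : sOf t (a + k * n) = sOf t a := by
  induction k using Int.induction_on with
  | zero => simp
  | succ k ih =>
    have e : a + ((k:ℤ)+1) * n = (a + k * n) + n := by ring
    rw [e, sOf_per, ih]
  | pred k ih =>
    have e : (a + (-(k:ℤ)-1) * n) + n = a + (-(k:ℤ)) * n := by ring
    have h2 := sOf_per t (a + (-(k:ℤ)-1) * n)
    rw [e] at h2
    rw [← h2]
    exact ih

noncomputable def sfOf (t : TITO n) (hn : 2 ≤ n) (h312 : t.Avoids312) (hreal : t.IsReal) :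
    SF n where
  s := sOf t
  per := sOf_per t
  nested := by
    intro a j hj1 hjle
    by_cases htop : t.rel (a + n) a
    · rw [sOf_top htop]
      exact le_top
    · have hne := sOf_ne_top htop
      have hrel : t.rel (a + j) a := (agree h312 hn a j hj1).mpr hjle
      have htop2 : ¬ t.rel ((a + j) + n) (a + j) := by
        intro htp
        apply hne
        apply enat_eq_top_of_forall
        intro M
        rcases Nat.eq_zero_or_pos M with rfl | hM
        · simp
        · have hall := top_all h312 (by omega) htp M hM
          have htrans := t.trans _ _ _ hall hrel
          have e : a + (j:ℤ) + (M:ℕ) = a + ((j + M : ℕ) : ℤ) := by push_cast; ring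
          rw [e] at htrans
          have h9 := (agree h312 hn a (j + M) (by omega)).mp htrans
          refine le_trans ?_ h9
          exact_mod_cast Nat.le_add_left M j
      have hne2 := sOf_ne_top htop2
      lift (sOf t a) to ℕ using hne with c hc
      lift (sOf t (a + (j:ℤ))) to ℕ using hne2 with c2 hc2
      have hgoal : c2 + j ≤ c := by
        rcases Nat.eq_zero_or_pos c2 with rfl | hc20
        · have : j ≤ c := by exact_mod_cast hjle
          omega
        · have hrel2 : t.rel ((a + j) + c2) (a + j) :=
            (agree h312 hn (a + j) c2 hc20).mpr (by rw [← hc2])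
          have htrans := t.trans _ _ _ hrel2 hrel
          have e : a + (j:ℤ) + (c2:ℕ) = a + ((c2 + j : ℕ) : ℤ) := by push_cast; ring
          rw [e] at htrans
          have h9 := (agree h312 hn a (c2 + j) (by omega)).mp htrans
          rw [← hc] at h9
          exact_mod_cast h9
      exact_mod_cast hgoal
  valid := by
    rintro ⟨p, hp, huniq⟩
    have hn0 : (0:ℤ) < n := by positivity
    have hrelp : t.rel (p + n) p := by
      by_contra h
      exact (sOf_ne_top h) hp
    have hconv : t.OrderConvex {x : ℤ | ∃ k : ℤ, x = p + k * n} := by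
      intro x hx z hz y hxy hyz
      by_contra hy
      obtain ⟨k, hk⟩ := hx
      have hnd : ¬ (n:ℤ) ∣ (y - p) := by
        rintro ⟨k2, hk2⟩
        exact hy ⟨k2, by linarith [hk2, mul_comm (n:ℤ) k2]⟩
      have hytop : sOf t y ≠ ⊤ := by
        intro h
        exact hnd (huniq y h)
      have hny : ¬ t.rel (y + n) y := fun h => hytop (sOf_top h)
      -- choose l ≥ k with p + l*n ≥ y + n
      set l : ℤ := k + (y + n - p - k * n).toNat with hl
      have hl1 : k ≤ l := by omega
      have hl2 : y + n ≤ p + l * n := by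
        have h9 : ((y + n - p - k * n).toNat : ℤ) ≥ y + n - p - k * n := by omega
        nlinarith [h9]
      -- rel y (p + l*n)
      have hm : t.rel y (p + l * n) := by
        set m : ℕ := (p + l * n - y).toNat with hmdef
        have hmn : n ≤ m := by omega
        have := notop h312 hny m hmn (by omega)
        have h2 := rel_of_not_rel this
        have e : y + (m:ℤ) = p + l * n := by omega
        rw [e] at h2
        exact h2
      -- chain down
      have hchain : ∀ i : ℕ, t.rel (p + (k + i) * n) (p + k * n) := by
        intro i
        induction i with
        | zero => simpa using t.refl _
        | succ i ih =>
          have hshift := (rel_shift (t := t) (k + i)).mp hrelp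
          have e : p + (n:ℤ) + (k + i) * n = p + (k + (i+1:ℕ)) * n := by push_cast; ring
          have e2 : p + (k + (i:ℤ)) * n = p + (k + (i:ℕ)) * n := by norm_num
          rw [e, e2] at hshift
          exact t.trans _ _ _ hshift ih
      have hlx : t.rel (p + l * n) x := by
        have := hchain (l - k).toNat
        have e : p + (k + ((l - k).toNat : ℤ)) * n = p + l * n := by
          have : ((l - k).toNat : ℤ) = l - k := by omega
          rw [this]; ring
        rw [e, ← hk] at this
        exact this
      have h1 : t.rel y x := t.trans _ _ _ hm hlx
      have hxy2 := t.antisymm x y hxy h1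
      exact hy ⟨k, by omega⟩
    have h2 := hreal p hconv
    have h3 := t.antisymm _ _ h2 hrelp
    omega

lemma toTITO_sfOf (t : TITO n) (hn : 2 ≤ n) (h312 : t.Avoids312) (hreal : t.IsReal) :
    (sfOf t hn h312 hreal).toTITO = t := by
  apply ext'
  intro a b
  rcases lt_trichotomy a b with h | h | h
  · rw [show (sfOf t hn h312 hreal).toTITO.rel a b ↔ (sfOf t hn h312 hreal).rel a b from Iff.rfl]
    rw [SF.rel_lt_iff _ h]
    unfold SF.inv
    have hs : (sfOf t hn h312 hreal).s = sOf t := rfl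
    rw [hs]
    rw [← agree h312 hn a ((b-a).toNat) (by omega)]
    have e : a + (((b-a).toNat : ℕ) : ℤ) = b := by omega
    rw [e]
    constructor
    · intro hnr
      exact rel_of_not_rel hnr
    · intro hr
      exact not_rel_of_rel (by omega) hr
  · subst h
    simp only [iff_true_intro (t.refl a)]
    exact iff_of_true (SF.rel_refl _ a) trivial
  · rw [show (sfOf t hn h312 hreal).toTITO.rel a b ↔ (sfOf t hn h312 hreal).rel a b from Iff.rfl]
    rw [SF.rel_gt_iff _ h]
    unfold SF.inv
    have hs : (sfOf t hn h312 hreal).s = sOf t := rfl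
    rw [hs]
    rw [← agree h312 hn b ((a-b).toNat) (by omega)]
    have e : b + (((a-b).toNat : ℕ) : ℤ) = a := by omega
    rw [e]

lemma sOf_toTITO (f : SF n) (hn : 2 ≤ n) : sOf f.toTITO = f.s := by
  funext x
  apply enat_eq_of_forall
  intro m
  rcases Nat.eq_zero_or_pos m with rfl | hm
  · simp
  · rw [← agree (f.toTITO_avoids312) hn x m hm]
    have : f.toTITO.rel (x + m) x ↔ f.rel (x + m) x := Iff.rfl
    rw [this, SF.rel_gt_iff _ (by omega)]
    unfold SF.inv
    have e : ((x + (m:ℤ) - x).toNat : ℕ) = m := by omega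
    rw [e]

lemma SF.ext' (f g : SF n) (h : f.s = g.s) : f = g := by
  cases f; cases g
  congr

noncomputable def sfEquiv (hn : 2 ≤ n) : SF n ≃ {t : TITO n // t.Avoids312 ∧ t.IsReal} where
  toFun f := ⟨f.toTITO, f.toTITO_avoids312, f.toTITO_isReal hn⟩
  invFun t := sfOf t.1 hn t.2.1 t.2.2
  left_inv f := SF.ext' _ _ (sOf_toTITO f hn)
  right_inv t := Subtype.ext (toTITO_sfOf t.1 hn t.2.1 t.2.2)

lemma inv_subset_iff (f g : SF n) :
    f.toTITO.Inversions ⊆ g.toTITO.Inversions ↔ ∀ x, f.s x ≤ g.s x := by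
  constructor
  · intro h x
    apply enat_le_of_forall
    intro m hm
    rcases Nat.eq_zero_or_pos m with rfl | hm1
    · simp
    · have hmem : ((x, x + (m:ℤ))) ∈ f.toTITO.Inversions := by
        refine ⟨by simpa using by omega, ?_⟩
        show f.rel (x + m) x
        rw [SF.rel_gt_iff _ (by omega)]
        unfold SF.inv
        have e : ((x + (m:ℤ) - x).toNat : ℕ) = m := by omega
        rw [e]
        exact hm
      have := h hmem
      obtain ⟨h1, h2⟩ := this
      change g.rel (x + m) x at h2
      rw [SF.rel_gt_iff _ (by omega)] at h2
      unfold SF.inv at h2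
      have e : ((x + (m:ℤ) - x).toNat : ℕ) = m := by omega
      rwa [e] at h2
  · rintro h ⟨a, b⟩ ⟨hab, hrel⟩
    refine ⟨hab, ?_⟩
    change f.rel b a at hrel
    rw [SF.rel_gt_iff _ hab] at hrel
    show g.rel b a
    rw [SF.rel_gt_iff _ hab]
    exact le_trans hrel (h a)

/-! ### The duality operator -/

noncomputable def C0 (s : ℤ → ℕ∞) (x : ℤ) : ℕ∞ :=
  if h : ∃ k : ℕ, ((k:ℕ∞) < s (-x - 1 - k)) then ((Nat.find h : ℕ) : ℕ∞) else ⊤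

lemma C0_le {s : ℤ → ℕ∞} {x : ℤ} {k : ℕ} (h : (k:ℕ∞) < s (-x - 1 - k)) :
    C0 s x ≤ (k:ℕ∞) := by
  rw [C0, dif_pos ⟨k, h⟩, Nat.cast_le]
  exact Nat.find_le h

lemma C0_cases (s : ℤ → ℕ∞) (x : ℤ) :
    C0 s x = ⊤ ∨ ∃ v : ℕ, C0 s x = (v:ℕ∞) ∧ (v:ℕ∞) < s (-x - 1 - v) ∧
      ∀ i : ℕ, i < v → s (-x - 1 - i) ≤ i := by
  by_cases h : ∃ k : ℕ, ((k:ℕ∞) < s (-x - 1 - k))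
  · refine Or.inr ⟨Nat.find h, by rw [C0, dif_pos h], Nat.find_spec h, ?_⟩
    intro i hi
    exact not_lt.mp (Nat.find_min h hi)
  · exact Or.inl (by rw [C0, dif_neg h])

lemma C0_gt_iff {s : ℤ → ℕ∞} {x : ℤ} (k : ℕ) :
    (k:ℕ∞) < C0 s x ↔ ∀ i : ℕ, i ≤ k → s (-x - 1 - i) ≤ i := by
  by_cases h : ∃ k : ℕ, ((k:ℕ∞) < s (-x - 1 - k))
  · rw [C0, dif_pos h, Nat.cast_lt, Nat.lt_find_iff]
    constructor
    · intro h2 i hi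
      exact not_lt.mp (h2 i hi)
    · intro h2 i hi
      exact not_lt.mpr (h2 i hi)
  · rw [C0, dif_neg h]
    push_neg at h
    constructor
    · intro _ i _
      exact h i
    · intro _
      exact lt_top_iff_ne_top.mpr (ENat.coe_ne_top k)

lemma C0_eq_top_iff {s : ℤ → ℕ∞} {x : ℤ} :
    C0 s x = ⊤ ↔ ∀ k : ℕ, s (-x - 1 - k) ≤ k := by
  constructor
  · intro h k
    have := (C0_gt_iff (s := s) (x := x) k).mp (by rw [h]; exact WithTop.coe_lt_top k)
    exact this k le_rfl
  · intro h
    rcases C0_cases s x with h2 | ⟨v, _, hv, _⟩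
    · exact h2
    · exact absurd (h v) (not_le.mpr hv)

lemma C0_per {s : ℤ → ℕ∞} (hper : ∀ a : ℤ, s (a + n) = s a) (x : ℤ) :
    C0 s (x + n) = C0 s x := by
  have hpos : ∀ k : ℕ, s (-(x + (n:ℤ)) - 1 - k) = s (-x - 1 - k) := by
    intro k
    have h0 := hper (-(x + (n:ℤ)) - 1 - k)
    have e : -(x + (n:ℤ)) - 1 - (k:ℤ) + n = -x - 1 - k := by ring
    rw [e] at h0
    exact h0.symm
  apply le_antisymm
  · rcases C0_cases s x with h | ⟨v, hv, hcond, _⟩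
    · rw [h]; exact le_top
    · calc C0 s (x + (n:ℤ)) ≤ (v:ℕ∞) := C0_le (by rw [hpos v]; exact hcond)
        _ = C0 s x := hv.symm
  · rcases C0_cases s (x + (n:ℤ)) with h | ⟨v, hv, hcond, _⟩
    · rw [h]; exact le_top
    · calc C0 s x ≤ (v:ℕ∞) := C0_le (by rw [← hpos v]; exact hcond)
        _ = C0 s (x + (n:ℤ)) := hv.symm

lemma C0_nested {s : ℤ → ℕ∞} (x : ℤ) (j : ℕ) (hj : 1 ≤ j) (hle : (j:ℕ∞) ≤ C0 s x) :
    C0 s (x + j) + j ≤ C0 s x := by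
  rcases C0_cases s x with h | ⟨v, hv, hcond, _⟩
  · rw [h]; exact le_top
  · rw [hv] at hle ⊢
    have hjv : j ≤ v := by exact_mod_cast hle
    have hwit : ((v - j : ℕ):ℕ∞) < s (-(x + j) - 1 - (v - j : ℕ)) := by
      have e : -(x + (j:ℤ)) - 1 - ((v - j : ℕ):ℤ) = -x - 1 - v := by omega
      rw [e]
      refine lt_of_le_of_lt ?_ hcond
      rw [Nat.cast_le]
      omega
    have := C0_le hwit
    calc C0 s (x + j) + j ≤ ((v - j:ℕ):ℕ∞) + j := add_le_add this le_rfl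
      _ = (v:ℕ∞) := by
          rw [← Nat.cast_add, Nat.cast_inj]
          omega

lemma C0_C0 {s : ℤ → ℕ∞}
    (hnest : ∀ a : ℤ, ∀ j : ℕ, 1 ≤ j → (j:ℕ∞) ≤ s a → s (a + j) + j ≤ s a) (z : ℤ) :
    C0 (C0 s) z = s z := by
  have cond_iff : ∀ k : ℕ, ((k:ℕ∞) < C0 s (-z - 1 - k) ↔
      ∀ j : ℕ, j ≤ k → s (z + j) + j ≤ (k:ℕ∞)) := by
    intro k
    rw [C0_gt_iff (s := s) (x := -z - 1 - k) k]
    constructor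
    · intro h j hj
      have h2 := h (k - j) (by omega)
      have e : -(-z - 1 - (k:ℤ)) - 1 - ((k - j:ℕ):ℤ) = z + j := by omega
      rw [e] at h2
      calc s (z + (j:ℤ)) + j ≤ ((k - j:ℕ):ℕ∞) + j := add_le_add h2 le_rfl
        _ ≤ (k:ℕ∞) := by rw [← Nat.cast_add, Nat.cast_le]; omega
    · intro h i hi
      have h2 := h (k - i) (by omega)
      have e : z + ((k - i:ℕ):ℤ) = -(-z - 1 - (k:ℤ)) - 1 - i := by omega
      rw [e] at h2
      by_cases htop : s (-(-z - 1 - (k:ℤ)) - 1 - i) = ⊤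
      · exfalso
        rw [htop, top_add] at h2
        exact absurd h2 (by simp)
      · obtain ⟨c, hc⟩ := enat_exists_coe htop
        rw [← hc] at h2 ⊢
        have h9 : c + (k - i) ≤ k := by exact_mod_cast h2
        rw [Nat.cast_le]
        omega
  apply le_antisymm
  · by_cases htop : s z = ⊤
    · rw [htop]; exact le_top
    · obtain ⟨c, hc⟩ := enat_exists_coe htop
      have hQ : (c:ℕ∞) < C0 s (-z - 1 - c) := by
        rw [cond_iff c]
        intro j hj
        rcases Nat.eq_zero_or_pos j with rfl | hj1
        · push_cast
          simp only [add_zero]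
          exact le_of_eq hc.symm
        · have h8 : (j:ℕ∞) ≤ s z := by rw [← hc, Nat.cast_le]; exact hj
          have h7 := hnest z j hj1 h8
          rw [← hc] at h7
          exact h7
      calc C0 (C0 s) z ≤ (c:ℕ∞) := C0_le hQ
        _ = s z := hc
  · rcases C0_cases (C0 s) z with h | ⟨v, hv, hcond, _⟩
    · rw [h]; exact le_top
    · rw [hv]
      rw [cond_iff v] at hcond
      have h2 := hcond 0 (by omega)
      simpa using h2

lemma enat_add_one_le_of_lt {k : ℕ} {A : ℕ∞} (h : (k:ℕ∞) < A) : ((k+1:ℕ):ℕ∞) ≤ A := by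
  by_cases htop : A = ⊤
  · rw [htop]; exact le_top
  · obtain ⟨c, hc⟩ := enat_exists_coe htop
    rw [← hc] at h ⊢
    rw [Nat.cast_lt] at h
    rw [Nat.cast_le]
    omega

lemma enat_top_not_le_coe {k : ℕ} : ¬ ((⊤:ℕ∞) ≤ (k:ℕ∞)) := by
  simp

/-- If `s` has a top value anywhere, then `C0 s` is nowhere top. -/
lemma C0_ne_top_of_top {f : SF n} (hn1 : 1 ≤ n) {c : ℤ} (hc : f.s c = ⊤) (x : ℤ) :
    C0 f.s x ≠ ⊤ := by
  intro htop
  have h0 := C0_eq_top_iff.mp htop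
  set k : ℕ := ((-x - 1 - c) % n).toNat with hk
  have h1 : (0:ℤ) ≤ (-x - 1 - c) % n := Int.emod_nonneg _ (by omega)
  have h2 : ((k:ℕ):ℤ) = (-x - 1 - c) % n := by omega
  have hdvd : (n:ℤ) ∣ ((-x - 1 - (k:ℤ)) - c) := by
    have h3 : (n:ℤ) ∣ ((-x - 1 - c) - ((-x - 1 - c) % n)) :=
      Int.dvd_self_sub_of_emod_eq rfl
    have e : (-x - 1 - (k:ℤ)) - c = (-x - 1 - c) - ((-x - 1 - c) % n) := by omega
    rw [e]
    exact h3
  have h4 : f.s (-x - 1 - (k:ℤ)) = ⊤ := by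
    rw [f.per_of_dvd hdvd]
    exact hc
  have h5 := h0 k
  rw [h4] at h5
  exact enat_top_not_le_coe h5

/-- The descent lemma: if the class of `p` is the unique top class of `C0 f.s`,
then `f.s (-p) = n - 1`. -/
lemma descent {f : SF n} (hn : 2 ≤ n) {p : ℤ} (htop : C0 f.s p = ⊤)
    (huniq : ∀ b : ℤ, C0 f.s b = ⊤ → (n:ℤ) ∣ (b - p)) :
    f.s (-p) = ((n-1 : ℕ) : ℕ∞) := by
  set g : ℤ := -p - 1 with hg
  have hT1 : ∀ c : ℤ, f.s c ≠ ⊤ := by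
    intro c hc
    exact C0_ne_top_of_top (by omega) hc p htop
  have NOCROSS : ∀ k : ℕ, f.s (g - k) ≤ k := by
    intro k
    have := C0_eq_top_iff.mp htop k
    have e : -p - 1 - (k:ℤ) = g - k := by rw [hg]
    rwa [e] at this
  have CROSSED : ∀ m : ℕ, ¬((n:ℤ) ∣ (m:ℤ)) → ∃ k : ℕ, (k:ℕ∞) < f.s (g - m - k) := by
    intro m hm
    have hne : C0 f.s (p + m) ≠ ⊤ := by
      intro h
      have := huniq (p + m) h
      have e : p + (m:ℤ) - p = m := by ring
      rw [e] at this
      exact hm this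
    rcases C0_cases f.s (p + m) with h | ⟨v, hv, hcond, _⟩
    · exact absurd h hne
    · refine ⟨v, ?_⟩
      have e : -(p + (m:ℤ)) - 1 - (v:ℤ) = g - m - v := by rw [hg]; ring
      rwa [e] at hcond
  -- one step of the descent
  have step : ∀ i : ℕ, 1 ≤ i → i ≤ n - 2 → f.s (g - i) = (i:ℕ∞) →
      ∃ i' : ℕ, i < i' ∧ i' ≤ n - 1 ∧ f.s (g - i') = (i':ℕ∞) := by
    intro i hi1 hi2 hsi
    have hnd : ¬ (n:ℤ) ∣ ((i+1 : ℕ):ℤ) := by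
      intro hd
      have := Int.le_of_dvd (by positivity) hd
      push_cast at this
      omega
    obtain ⟨k, hk⟩ := CROSSED (i+1) hnd
    set b : ℤ := g - ((i+1:ℕ):ℤ) - k with hb
    have hkk : ((k+1:ℕ):ℕ∞) ≤ f.s b := enat_add_one_le_of_lt hk
    have hnested := f.nested b (k+1) (by omega) hkk
    have e : b + ((k+1:ℕ):ℤ) = g - i := by rw [hb]; push_cast; ring
    rw [e, hsi] at hnested
    -- hnested : (i:ℕ∞) + (k+1) ≤ f.s b
    obtain ⟨c, hc⟩ := enat_exists_coe (hT1 b)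
    have hub : f.s b ≤ ((i + 1 + k : ℕ):ℕ∞) := by
      have h9 := NOCROSS (i + 1 + k)
      have e2 : g - ((i+1+k : ℕ):ℤ) = b := by rw [hb]; push_cast; ring
      rwa [e2] at h9
    rw [← hc] at hnested hub
    rw [← Nat.cast_add, Nat.cast_le] at hnested
    rw [Nat.cast_le] at hub
    have hceq : c = i + k + 1 := by omega
    have hclt : c < n := by
      have := f.lt_n_of_ne_top (by omega) (hT1 b)
      rw [← hc, Nat.cast_lt] at this
      exact this
    refine ⟨i + k + 1, by omega, by omega, ?_⟩
    have e3 : g - ((i+k+1 : ℕ):ℤ) = b := by rw [hb]; push_cast; ring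
    rw [e3, ← hc, hceq]
  -- base
  have base : ∃ i : ℕ, 1 ≤ i ∧ i ≤ n - 1 ∧ f.s (g - i) = (i:ℕ∞) := by
    have hnd : ¬ (n:ℤ) ∣ ((1:ℕ):ℤ) := by
      intro hd
      have := Int.le_of_dvd (by norm_num) hd
      omega
    obtain ⟨k, hk⟩ := CROSSED 1 hnd
    set b : ℤ := g - ((1:ℕ):ℤ) - k with hb
    obtain ⟨c, hc⟩ := enat_exists_coe (hT1 b)
    have hub : f.s b ≤ ((1 + k : ℕ):ℕ∞) := by
      have h9 := NOCROSS (1 + k)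
      have e2 : g - ((1+k : ℕ):ℤ) = b := by rw [hb]; push_cast; ring
      rwa [e2] at h9
    rw [← hc] at hk hub
    rw [Nat.cast_lt] at hk
    rw [Nat.cast_le] at hub
    have hceq : c = k + 1 := by omega
    have hclt : c < n := by
      have := f.lt_n_of_ne_top (by omega) (hT1 b)
      rw [← hc, Nat.cast_lt] at this
      exact this
    refine ⟨k + 1, by omega, by omega, ?_⟩
    have e3 : g - ((k+1 : ℕ):ℤ) = b := by rw [hb]; push_cast; ring
    rw [e3, ← hc, hceq]
  -- iterate
  have main : ∀ d : ℕ, ∀ i : ℕ, 1 ≤ i → i ≤ n - 1 → n - 1 - i ≤ d → f.s (g - i) = (i:ℕ∞) →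
      f.s (g - ((n-1:ℕ):ℤ)) = ((n-1:ℕ):ℕ∞) := by
    intro d
    induction d with
    | zero =>
      intro i h1 h2 h3 hs
      have : i = n - 1 := by omega
      subst this
      exact hs
    | succ d ih =>
      intro i h1 h2 h3 hs
      rcases eq_or_lt_of_le h2 with he | hlt
      · subst he
        exact hs
      · obtain ⟨i', hi'1, hi'2, hi'3⟩ := step i h1 (by omega) hs
        exact ih i' (by omega) hi'2 (by omega) hi'3
  obtain ⟨i0, h1, h2, h3⟩ := base
  have hfinal := main (n - 1 - i0) i0 h1 h2 le_rfl h3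
  have e : g - ((n-1:ℕ):ℤ) = -p - n := by rw [hg]; push_cast [Nat.cast_sub (by omega : 1 ≤ n)]; ring
  rw [e] at hfinal
  have e2 : f.s (-p - n) = f.s (-p) := by
    have h8 := f.per (-p - n)
    have e3 : -p - (n:ℤ) + n = -p := by ring
    rw [e3] at h8
    exact h8.symm
  rw [← e2]
  exact hfinal

/-! ### generic periodic-function helpers -/

lemma per_int' {u : ℤ → ℕ∞} (hper : ∀ a : ℤ, u (a + n) = u a) (a : ℤ) (k : ℤ) :
    u (a + k * n) = u a := by
  induction k using Int.induction_on with
  | zero => simp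
  | succ k ih =>
    have e : a + ((k:ℤ)+1) * n = (a + k * n) + n := by ring
    rw [e, hper, ih]
  | pred k ih =>
    have e : (a + (-(k:ℤ)-1) * n) + n = a + (-(k:ℤ)) * n := by ring
    have h2 := hper (a + (-(k:ℤ)-1) * n)
    rw [e] at h2
    rw [← h2]
    exact ih

lemma per_of_dvd' {u : ℤ → ℕ∞} (hper : ∀ a : ℤ, u (a + n) = u a) {a b : ℤ}
    (h : (n:ℤ) ∣ (b - a)) : u b = u a := by
  obtain ⟨k, hk⟩ := h
  have : b = a + k * n := by linarith [hk, mul_comm (n:ℤ) k]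
  rw [this]
  exact per_int' hper a k

lemma lt_n' {u : ℤ → ℕ∞} (hper : ∀ a : ℤ, u (a + n) = u a)
    (hnest : ∀ a : ℤ, ∀ j : ℕ, 1 ≤ j → (j:ℕ∞) ≤ u a → u (a + j) + j ≤ u a)
    (hn1 : 1 ≤ n) {a : ℤ} (h : u a ≠ ⊤) : u a < (n:ℕ∞) := by
  by_contra hlt
  push_neg at hlt
  have h2 := hnest a n hn1 hlt
  rw [hper] at h2
  obtain ⟨v, hv⟩ := enat_exists_coe h
  rw [← hv] at h2
  rw [← Nat.cast_add, Nat.cast_le] at h2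
  omega

/-! ### cross-condition lemmas -/

lemma C0_cross_iff {s : ℤ → ℕ∞} (z : ℤ) (k : ℕ) :
    ((k:ℕ∞) < C0 s (-z - 1 - k)) ↔ ∀ j : ℕ, j ≤ k → s (z + j) + j ≤ (k:ℕ∞) := by
  rw [C0_gt_iff (s := s) (x := -z - 1 - k) k]
  constructor
  · intro h j hj
    have h2 := h (k - j) (by omega)
    have e : -(-z - 1 - (k:ℤ)) - 1 - ((k - j:ℕ):ℤ) = z + j := by omega
    rw [e] at h2
    calc s (z + (j:ℤ)) + j ≤ ((k - j:ℕ):ℕ∞) + j := add_le_add h2 le_rfl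
      _ ≤ (k:ℕ∞) := by rw [← Nat.cast_add, Nat.cast_le]; omega
  · intro h i hi
    have h2 := h (k - i) (by omega)
    have e : z + ((k - i:ℕ):ℤ) = -(-z - 1 - (k:ℤ)) - 1 - i := by omega
    rw [e] at h2
    by_cases htop : s (-(-z - 1 - (k:ℤ)) - 1 - i) = ⊤
    · exfalso
      rw [htop, top_add] at h2
      exact absurd h2 (by simp)
    · obtain ⟨c, hc⟩ := enat_exists_coe htop
      rw [← hc] at h2 ⊢
      have h9 : c + (k - i) ≤ k := by exact_mod_cast h2
      rw [Nat.cast_le]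
      omega

lemma C0_refl_lt {s : ℤ → ℕ∞}
    (hnest : ∀ a : ℤ, ∀ j : ℕ, 1 ≤ j → (j:ℕ∞) ≤ s a → s (a + j) + j ≤ s a)
    (z : ℤ) (c : ℕ) (hc : (c:ℕ∞) = s z) : (c:ℕ∞) < C0 s (-z - 1 - c) := by
  rw [C0_cross_iff z c]
  intro j hj
  rcases Nat.eq_zero_or_pos j with rfl | hj1
  · push_cast
    simp only [add_zero]
    exact le_of_eq hc.symm
  · have h8 : (j:ℕ∞) ≤ s z := by rw [← hc, Nat.cast_le]; exact hj
    have h7 := hnest z j hj1 h8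
    rw [← hc] at h7
    exact h7

/-! ### the bump and Psi -/

def bumpCond (m : ℕ) (u : ℤ → ℕ∞) (x : ℤ) : Prop :=
  u x = ⊤ ∧ ∀ b : ℤ, u b = ⊤ → (m:ℤ) ∣ (b - x)

noncomputable def bump (m : ℕ) (u : ℤ → ℕ∞) (x : ℤ) : ℕ∞ :=
  if bumpCond m u x then ((m-1:ℕ):ℕ∞) else u x

lemma bumpCond_shift {u : ℤ → ℕ∞} (hper : ∀ a : ℤ, u (a + n) = u a) (x : ℤ) :
    bumpCond n u (x + n) ↔ bumpCond n u x := by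
  unfold bumpCond
  rw [hper x]
  constructor
  · rintro ⟨h1, h2⟩
    refine ⟨h1, fun b hb => ?_⟩
    have h3 := h2 b hb
    have e : b - x = (b - (x + n)) + n * 1 := by ring
    rw [e]
    exact dvd_add h3 (dvd_mul_right _ _)
  · rintro ⟨h1, h2⟩
    refine ⟨h1, fun b hb => ?_⟩
    have h3 := h2 b hb
    have e : b - (x + n) = (b - x) + n * (-1) := by ring
    rw [e]
    exact dvd_add h3 (dvd_mul_right _ _)

lemma bump_per {u : ℤ → ℕ∞} (hper : ∀ a : ℤ, u (a + n) = u a) (x : ℤ) :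
    bump n u (x + n) = bump n u x := by
  unfold bump
  rw [iff_iff_eq.mp (bumpCond_shift hper x), hper x]

section Psi

lemma psi_nested (hn : 2 ≤ n) (f : SF n) (a : ℤ) (j : ℕ) (hj1 : 1 ≤ j)
    (hjle : (j:ℕ∞) ≤ bump n (C0 f.s) a) :
    bump n (C0 f.s) (a + j) + j ≤ bump n (C0 f.s) a := by
  set u := C0 f.s with hu
  simp only [bump] at hjle ⊢
  by_cases hca : bumpCond n u a
  · rw [if_pos hca] at hjle
    rw [if_pos hca]
    have hjn : j ≤ n - 1 := by exact_mod_cast hjle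
    have hcaj : ¬ bumpCond n u (a + j) := by
      rintro ⟨htj, _⟩
      have h2 := hca.2 (a + j) htj
      have e : a + (j:ℤ) - a = j := by ring
      rw [e] at h2
      have := Int.le_of_dvd (by positivity) h2
      omega
    rw [if_neg hcaj]
    have hsa := descent hn hca.1 hca.2
    have hwit : ((n-1-j:ℕ):ℕ∞) < f.s (-(a + (j:ℤ)) - 1 - ((n-1-j:ℕ):ℤ)) := by
      have e : -(a + (j:ℤ)) - 1 - ((n-1-j:ℕ):ℤ) = -a - n := by omega
      rw [e]
      have h5 := f.per (-a - n)
      have e3 : -a - (n:ℤ) + n = -a := by ring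
      rw [e3] at h5
      rw [← h5, hsa, Nat.cast_lt]
      omega
    have h6 := C0_le hwit
    calc u (a + (j:ℤ)) + j ≤ ((n-1-j:ℕ):ℕ∞) + j := add_le_add h6 le_rfl
      _ ≤ ((n-1:ℕ):ℕ∞) := by rw [← Nat.cast_add, Nat.cast_le]; omega
  · rw [if_neg hca] at hjle
    rw [if_neg hca]
    by_cases hcaj : bumpCond n u (a + j)
    · exfalso
      have htj := hcaj.1
      have h2 := C0_nested (s := f.s) a j hj1 hjle
      rw [← hu] at h2
      rw [htj, top_add] at h2
      have hua : u a = ⊤ := top_le_iff.mp h2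
      apply hca
      refine ⟨hua, fun b hb => ?_⟩
      have hd := hcaj.2 b hb
      have hd2 := hcaj.2 a hua
      have e : b - a = (b - (a + j)) - (a - (a + j)) := by ring
      rw [e]
      exact dvd_sub hd hd2
    · rw [if_neg hcaj]
      exact C0_nested a j hj1 hjle

lemma psi_valid (f : SF n) : ¬ ∃ p : ℤ, bump n (C0 f.s) p = ⊤ ∧
    ∀ b : ℤ, bump n (C0 f.s) b = ⊤ → (n:ℤ) ∣ (b - p) := by
  set u := C0 f.s with hu
  rintro ⟨p, hp, huniq⟩
  simp only [bump] at hp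
  by_cases hc : bumpCond n u p
  · rw [if_pos hc] at hp
    exact (ENat.coe_ne_top _) hp
  · rw [if_neg hc] at hp
    have h1 : ¬ ∀ b : ℤ, u b = ⊤ → (n:ℤ) ∣ (b - p) := fun h => hc ⟨hp, h⟩
    push_neg at h1
    obtain ⟨b, hb, hnd⟩ := h1
    by_cases hcb : bumpCond n u b
    · apply hnd
      have h2 := hcb.2 p hp
      have e : b - p = -(p - b) := by ring
      rw [e]
      exact dvd_neg.mpr h2
    · have h3 : bump n u b = ⊤ := by simp only [bump]; rw [if_neg hcb]; exact hb
      exact hnd (huniq b h3)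

noncomputable def PsiSF (hn : 2 ≤ n) (f : SF n) : SF n where
  s := bump n (C0 f.s)
  per := fun a => bump_per (fun x => C0_per f.per x) a
  nested := psi_nested hn f
  valid := psi_valid f

lemma psi_psi (hn : 2 ≤ n) (f : SF n) : PsiSF hn (PsiSF hn f) = f := by
  apply SF.ext'
  funext z
  show bump n (C0 (bump n (C0 f.s))) z = f.s z
  set u := C0 f.s with hu
  set v := bump n u with hv
  by_cases hex : ∃ p : ℤ, bumpCond n u p
  case neg =>
    have hveq : v = u := by
      funext x
      rw [hv]
      simp only [bump]
      rw [if_neg (fun hc => hex ⟨x, hc⟩)]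
    have hCvf : C0 v = f.s := by
      funext y
      rw [hveq, hu]
      exact C0_C0 f.nested y
    rw [hCvf]
    simp only [bump]
    rw [if_neg]
    intro hcz
    exact f.valid ⟨z, hcz.1, hcz.2⟩
  case pos =>
    obtain ⟨p, hc⟩ := hex
    have hupt : u p = ⊤ := hc.1
    have huq := hc.2
    have hn1 : (1:ℕ) ≤ n := by omega
    have sfin : ∀ c : ℤ, f.s c ≠ ⊤ := fun c h => C0_ne_top_of_top hn1 h p hupt
    have hsnp : f.s (-p) = ((n-1:ℕ):ℕ∞) := descent hn hupt huq
    have uper : ∀ a : ℤ, u (a + n) = u a := fun a => C0_per f.per a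
    have vtop : ∀ x : ℤ, (n:ℤ) ∣ (x - p) → v x = ((n-1:ℕ):ℕ∞) := by
      intro x hd
      have hux : u x = ⊤ := by rw [per_of_dvd' uper hd]; exact hupt
      have hbc : bumpCond n u x := by
        refine ⟨hux, fun b hb => ?_⟩
        have h2 := huq b hb
        have e : b - x = (b - p) - (x - p) := by ring
        rw [e]
        exact dvd_sub h2 hd
      rw [hv]
      simp only [bump]
      rw [if_pos hbc]
    have vne : ∀ x : ℤ, ¬ (n:ℤ) ∣ (x - p) → v x = u x ∧ u x ≠ ⊤ := by
      intro x hd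
      have hux : u x ≠ ⊤ := fun h => hd (huq x h)
      have hbc : ¬ bumpCond n u x := fun h => hux h.1
      refine ⟨?_, hux⟩
      rw [hv]
      simp only [bump]
      rw [if_neg hbc]
    have ultn : ∀ x : ℤ, u x ≠ ⊤ → u x < (n:ℕ∞) := fun x h =>
      lt_n' uper (fun a j h1 h2 => C0_nested a j h1 h2) hn1 h
    have B1 : ∀ z' : ℤ, ¬ (n:ℤ) ∣ (z' + p) → C0 v z' = f.s z' := by
      intro z' hzp
      obtain ⟨c, hcc⟩ := enat_exists_coe (sfin z')
      have hclt : c < n := by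
        have h8 := f.lt_n_of_ne_top hn1 (sfin z')
        rw [← hcc, Nat.cast_lt] at h8
        exact h8
      apply le_antisymm
      · rw [← hcc]
        apply C0_le
        set w : ℤ := -z' - 1 - (c:ℤ) with hw
        by_cases hwd : (n:ℤ) ∣ (w - p)
        · rw [vtop w hwd, Nat.cast_lt]
          rcases Nat.lt_or_ge c (n-1) with h | h
          · exact h
          · exfalso
            have hceq : c = n - 1 := by omega
            apply hzp
            have e : z' + p = -(w - p) - (n:ℤ) := by rw [hw]; omega
            rw [e]
            exact dvd_sub (dvd_neg.mpr hwd) (dvd_refl _)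
        · rw [(vne w hwd).1]
          exact C0_refl_lt f.nested z' c hcc
      · rw [← hcc]
        rcases Nat.eq_zero_or_pos c with rfl | hc1
        · simp
        · have h9 : ((c-1:ℕ):ℕ∞) < C0 (C0 f.s) z' := by
            rw [C0_C0 f.nested z', ← hcc, Nat.cast_lt]
            omega
          rw [C0_gt_iff] at h9
          have h10 : ((c-1:ℕ):ℕ∞) < C0 v z' := by
            rw [C0_gt_iff]
            intro i hi
            have h11 := h9 i hi
            set w : ℤ := -z' - 1 - (i:ℤ) with hw
            rw [← hu] at h11
            have hwne : u w ≠ ⊤ := by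
              intro h
              rw [h] at h11
              exact enat_top_not_le_coe h11
            have hwd : ¬ (n:ℤ) ∣ (w - p) := by
              intro hd
              apply hwne
              rw [per_of_dvd' uper hd]
              exact hupt
            rw [(vne w hwd).1]
            exact h11
          have h12 := enat_add_one_le_of_lt h10
          rwa [show c - 1 + 1 = c from by omega] at h12
    have B2 : ∀ z' : ℤ, (n:ℤ) ∣ (z' + p) → C0 v z' = ⊤ := by
      intro z' hzp
      rw [C0_eq_top_iff]
      intro k
      set w : ℤ := -z' - 1 - (k:ℤ) with hw
      have hsz : f.s z' = ((n-1:ℕ):ℕ∞) := by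
        rw [per_of_dvd' (fun a => f.per a) (show (n:ℤ) ∣ z' - (-p) from by rwa [sub_neg_eq_add])]
        exact hsnp
      by_cases hwd : (n:ℤ) ∣ (w - p)
      · rw [vtop w hwd, Nat.cast_le]
        have hd2 : (n:ℤ) ∣ ((k:ℤ) + 1) := by
          have h3 := dvd_add hwd hzp
          have e : w - p + (z' + p) = -((k:ℤ) + 1) := by rw [hw]; ring
          rw [e] at h3
          exact (dvd_neg).mp h3
        have := Int.le_of_dvd (by positivity) hd2
        omega
      · rw [(vne w hwd).1]
        rcases Nat.lt_or_ge k (n-1) with hk | hk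
        · have h9 : ((k:ℕ):ℕ∞) < C0 (C0 f.s) z' := by
            rw [C0_C0 f.nested z', hsz, Nat.cast_lt]
            omega
          rw [C0_gt_iff] at h9
          exact h9 k le_rfl
        · have h12 := ultn w (vne w hwd).2
          obtain ⟨c2, hc2⟩ := enat_exists_coe (vne w hwd).2
          rw [← hc2] at h12 ⊢
          rw [Nat.cast_lt] at h12
          rw [Nat.cast_le]
          omega
    by_cases hz : (n:ℤ) ∣ (z + p)
    · have h1 := B2 z hz
      have hbc : bumpCond n (C0 v) z := by
        refine ⟨h1, fun b hb => ?_⟩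
        by_cases hbd : (n:ℤ) ∣ (b + p)
        · have e : b - z = (b + p) - (z + p) := by ring
          rw [e]
          exact dvd_sub hbd hz
        · rw [B1 b hbd] at hb
          exact absurd hb (sfin b)
      simp only [bump]
      rw [if_pos hbc]
      have hsz : f.s z = ((n-1:ℕ):ℕ∞) := by
        rw [per_of_dvd' (fun a => f.per a) (show (n:ℤ) ∣ z - (-p) from by rwa [sub_neg_eq_add])]
        exact hsnp
      rw [hsz]
    · have h1 := B1 z hz
      have hbc : ¬ bumpCond n (C0 v) z := by
        intro h
        apply sfin z
        rw [← h1]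
        exact h.1
      simp only [bump]
      rw [if_neg hbc, h1]

end Psi

lemma C0_anti {s s' : ℤ → ℕ∞} (h : ∀ y, s y ≤ s' y) (x : ℤ) : C0 s' x ≤ C0 s x := by
  rcases C0_cases s x with h2 | ⟨v, hv, hcond, _⟩
  · rw [h2]; exact le_top
  · rw [hv]
    exact C0_le (lt_of_lt_of_le hcond (h _))

lemma psi_anti (hn : 2 ≤ n) (f f' : SF n) (h : ∀ x, f.s x ≤ f'.s x) (x : ℤ) :
    (PsiSF hn f').s x ≤ (PsiSF hn f).s x := by
  show bump n (C0 f'.s) x ≤ bump n (C0 f.s) x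
  set u := C0 f.s with hu
  set u' := C0 f'.s with hu'
  have hle : ∀ y, u' y ≤ u y := fun y => C0_anti h y
  have hn1 : (1:ℕ) ≤ n := by omega
  simp only [bump]
  by_cases hc' : bumpCond n u' x
  · rw [if_pos hc']
    by_cases hcx : bumpCond n u x
    · rw [if_pos hcx]
    · rw [if_neg hcx]
      have h3 : u x = ⊤ := top_le_iff.mp (hc'.1 ▸ hle x)
      rw [h3]
      exact le_top
  · rw [if_neg hc']
    by_cases hcx : bumpCond n u x
    · rw [if_pos hcx]
      have hne : u' x ≠ ⊤ := by
        intro ht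
        apply hc'
        exact ⟨ht, fun b hb => hcx.2 b (top_le_iff.mp (hb ▸ hle b))⟩
      have hlt := lt_n' (fun a => C0_per f'.per a)
        (fun a j h1 h2 => C0_nested a j h1 h2) hn1 hne
      rw [← hu'] at hlt
      obtain ⟨c, hcc⟩ := enat_exists_coe hne
      rw [← hcc] at hlt ⊢
      rw [Nat.cast_lt] at hlt
      rw [Nat.cast_le]
      omega
    · rw [if_neg hcx]
      exact hle x

/-! ### The negation-conjugation map -/

def DN (t : TITO n) : TITO n where
  rel a b := t.rel (-a) (-b)
  refl a := t.refl (-a)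
  antisymm a b h1 h2 := by
    have := t.antisymm _ _ h1 h2
    omega
  trans a b c h1 h2 := t.trans _ _ _ h1 h2
  total a b := t.total _ _
  invariant a b := by
    have h1 := t.invariant (-(a + (n:ℤ))) (-(b + (n:ℤ)))
    have e1 : -(a + (n:ℤ)) + n = -a := by ring
    have e2 : -(b + (n:ℤ)) + n = -b := by ring
    rw [e1, e2] at h1
    exact h1.symm

lemma DN_DN (t : TITO n) : DN (DN t) = t := by
  apply ext'
  intro a b
  show t.rel (- -a) (- -b) ↔ t.rel a b
  rw [neg_neg, neg_neg]

lemma DN_inv_mono {t1 t2 : TITO n}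
    (h : t1.Inversions ⊆ t2.Inversions) : (DN t2).Inversions ⊆ (DN t1).Inversions := by
  rintro ⟨a, b⟩ ⟨hab, hrel⟩
  change t2.rel (-b) (-a) at hrel
  refine ⟨hab, ?_⟩
  change t1.rel (-b) (-a)
  apply rel_of_not_rel
  intro hrel1
  have hmem : ((-b, -a)) ∈ t1.Inversions := ⟨by omega, hrel1⟩
  have := h hmem
  have h2 : t2.rel (-a) (-b) := this.2
  have := t2.antisymm _ _ hrel h2
  omega

lemma DN_inv_iff {t1 t2 : TITO n} :
    t1.Inversions ⊆ t2.Inversions ↔ (DN t2).Inversions ⊆ (DN t1).Inversions := by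
  constructor
  · exact DN_inv_mono
  · intro h
    have := DN_inv_mono h
    rwa [DN_DN, DN_DN] at this

lemma DN_avoids132 {t : TITO n} (h312 : t.Avoids312) : (DN t).Avoids132 := by
  rintro ⟨a, b, c, hab, hbc, h1, h2⟩
  exact h312 ⟨-c, -b, -a, by omega, by omega, h1, h2⟩

lemma DN_avoids312 {t : TITO n} (h132 : t.Avoids132) : (DN t).Avoids312 := by
  rintro ⟨a, b, c, hab, hbc, h1, h2⟩
  exact h132 ⟨-c, -b, -a, by omega, by omega, h1, h2⟩

lemma DN_isCoReal {t : TITO n} (hreal : t.IsReal) : (DN t).IsCoReal := by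
  intro a hconv
  show t.rel (-(a + (n:ℤ))) (-a)
  have hb : t.rel (-a - n) ((-a - n) + n) := by
    apply hreal
    intro x hx z hz y hxy hyz
    obtain ⟨k, hk⟩ := hx
    obtain ⟨l, hl⟩ := hz
    have h1 : (DN t).rel (-x) (-y) := by
      show t.rel (- -x) (- -y)
      rw [neg_neg, neg_neg]
      exact hxy
    have h2 : (DN t).rel (-y) (-z) := by
      show t.rel (- -y) (- -z)
      rw [neg_neg, neg_neg]
      exact hyz
    have hmem := hconv (-x) ⟨1 - k, by rw [hk]; ring⟩ (-z) ⟨1 - l, by rw [hl]; ring⟩ (-y) h1 h2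
    obtain ⟨m, hm⟩ := hmem
    exact ⟨1 - m, by linear_combination -hm⟩
  have e : -a - (n:ℤ) + n = -a := by ring
  rw [e] at hb
  have e2 : -(a + (n:ℤ)) = -a - n := by ring
  rw [e2]
  exact hb

lemma DN_isReal {t : TITO n} (hco : t.IsCoReal) : (DN t).IsReal := by
  intro a hconv
  show t.rel (-a) (-(a + (n:ℤ)))
  have hb : t.rel ((-a - n) + n) (-a - n) := by
    apply hco
    intro x hx z hz y hxy hyz
    obtain ⟨k, hk⟩ := hx
    obtain ⟨l, hl⟩ := hz
    have h1 : (DN t).rel (-x) (-y) := by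
      show t.rel (- -x) (- -y)
      rw [neg_neg, neg_neg]
      exact hxy
    have h2 : (DN t).rel (-y) (-z) := by
      show t.rel (- -y) (- -z)
      rw [neg_neg, neg_neg]
      exact hyz
    have hmem := hconv (-x) ⟨1 - k, by rw [hk]; ring⟩ (-z) ⟨1 - l, by rw [hl]; ring⟩ (-y) h1 h2
    obtain ⟨m, hm⟩ := hmem
    exact ⟨1 - m, by linear_combination -hm⟩
  have e : -a - (n:ℤ) + n = -a := by ring
  rw [e] at hb
  have e2 : -(a + (n:ℤ)) = -a - n := by ring
  rw [e2]
  exact hb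

end Dev

theorem stmt9 (n : ℕ) (hn : 2 ≤ n) :
    (∃ φ : {t : TITO n // t.Avoids312 ∧ t.IsReal} → {t : TITO n // t.Avoids132 ∧ t.IsCoReal},
      Function.Bijective φ ∧
      ∀ x y : {t : TITO n // t.Avoids312 ∧ t.IsReal},
        x.val.Inversions ⊆ y.val.Inversions ↔ (φ x).val.Inversions ⊆ (φ y).val.Inversions) ∧
    (∃ ψ : {t : TITO n // t.Avoids312 ∧ t.IsReal} → {t : TITO n // t.Avoids312 ∧ t.IsReal},
      Function.Bijective ψ ∧
      ∀ x y : {t : TITO n // t.Avoids312 ∧ t.IsReal},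
        x.val.Inversions ⊆ y.val.Inversions ↔ (ψ y).val.Inversions ⊆ (ψ x).val.Inversions) := by
  classical
  let E := Dev.sfEquiv (n := n) hn
  let psi : {t : TITO n // t.Avoids312 ∧ t.IsReal} → {t : TITO n // t.Avoids312 ∧ t.IsReal} :=
    fun x => E (Dev.PsiSF hn (E.symm x))
  have hpsi_invol : ∀ x, psi (psi x) = x := by
    intro x
    show E (Dev.PsiSF hn (E.symm (E (Dev.PsiSF hn (E.symm x))))) = x
    rw [Equiv.symm_apply_apply, Dev.psi_psi, Equiv.apply_symm_apply]
  have hpsi_bij : Function.Bijective psi :=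
    Function.bijective_iff_has_inverse.mpr ⟨psi, hpsi_invol, hpsi_invol⟩
  have hord : ∀ f g : Dev.SF n,
      ((E f).val.Inversions ⊆ (E g).val.Inversions) ↔ ∀ x, f.s x ≤ g.s x := by
    intro f g
    exact Dev.inv_subset_iff f g
  have hanti : ∀ f g : Dev.SF n,
      (∀ x, f.s x ≤ g.s x) ↔ (∀ x, (Dev.PsiSF hn g).s x ≤ (Dev.PsiSF hn f).s x) := by
    intro f g
    constructor
    · intro h
      exact Dev.psi_anti hn f g h
    · intro h
      have h2 := Dev.psi_anti hn (Dev.PsiSF hn g) (Dev.PsiSF hn f) h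
      rw [Dev.psi_psi hn f, Dev.psi_psi hn g] at h2
      exact h2
  have hpsi_ord : ∀ x y : {t : TITO n // t.Avoids312 ∧ t.IsReal},
      x.val.Inversions ⊆ y.val.Inversions ↔
      (psi y).val.Inversions ⊆ (psi x).val.Inversions := by
    intro x y
    have hx : x = E (E.symm x) := (Equiv.apply_symm_apply E x).symm
    have hy : y = E (E.symm y) := (Equiv.apply_symm_apply E y).symm
    calc x.val.Inversions ⊆ y.val.Inversions
        ↔ (E (E.symm x)).val.Inversions ⊆ (E (E.symm y)).val.Inversions := by
          rw [← hx, ← hy]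
      _ ↔ ∀ z, (E.symm x).s z ≤ (E.symm y).s z := hord _ _
      _ ↔ ∀ z, (Dev.PsiSF hn (E.symm y)).s z ≤ (Dev.PsiSF hn (E.symm x)).s z := hanti _ _
      _ ↔ (psi y).val.Inversions ⊆ (psi x).val.Inversions := (hord _ _).symm
  let dn : {t : TITO n // t.Avoids312 ∧ t.IsReal} → {t : TITO n // t.Avoids132 ∧ t.IsCoReal} :=
    fun x => ⟨Dev.DN x.val, Dev.DN_avoids132 x.2.1, Dev.DN_isCoReal x.2.2⟩
  let dn' : {t : TITO n // t.Avoids132 ∧ t.IsCoReal} → {t : TITO n // t.Avoids312 ∧ t.IsReal} :=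
    fun y => ⟨Dev.DN y.val, Dev.DN_avoids312 y.2.1, Dev.DN_isReal y.2.2⟩
  have hdn_bij : Function.Bijective dn :=
    Function.bijective_iff_has_inverse.mpr
      ⟨dn', fun x => Subtype.ext (Dev.DN_DN x.val), fun y => Subtype.ext (Dev.DN_DN y.val)⟩
  refine ⟨⟨dn ∘ psi, hdn_bij.comp hpsi_bij, ?_⟩, ⟨psi, hpsi_bij, hpsi_ord⟩⟩
  intro x y
  calc x.val.Inversions ⊆ y.val.Inversions
      ↔ (psi y).val.Inversions ⊆ (psi x).val.Inversions := hpsi_ord x y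
    _ ↔ ((dn ∘ psi) x).val.Inversions ⊆ ((dn ∘ psi) y).val.Inversions := Dev.DN_inv_iff
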